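/- The lexicographic strict order List.Lex (· < ·) on lists of natural numbers — where α < β if and only if there is some k such that the first k entries of α and β coincide and either α has exactly k entries while β has more than k entries, or both lists have a (k+1)st entry and the (k+1)st entry of α is strictly less than that of β — is well-founded when restricted to lists that are sorted in non-increasing order. Equivalently, there is no infinite sequence L₀, L₁, L₂, … of lists of natural numbers, each sorted in non-increasing order, with L_{i+1} < L_i (in List.Lex (· < ·)) for every i. -/

import Mathlib

open Ordinal

/-- Ordinal value of a list of naturals: sum of `ω ^ a` over entries. -/
private noncomputable def ordVal : List ℕ → Ordinal.{0}
  | [] => 0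
  | a :: l => ω ^ (a : Ordinal) + ordVal l

private lemma ordVal_lt_of_forall_le {l : List ℕ} {a : ℕ} (h : ∀ b ∈ l, b ≤ a) :
    ordVal l < ω ^ ((a : Ordinal) + 1) := by
  induction l with
  | nil =>
      simpa [ordVal] using (opow_pos ((a : Ordinal) + 1) omega0_pos)
  | cons b l ih =>
      have hb : (b : Ordinal) < (a : Ordinal) + 1 := by
        have := h b (by simp)
        exact_mod_cast Nat.lt_succ_of_le this
      have h1 : ω ^ (b : Ordinal) < ω ^ ((a : Ordinal) + 1) :=
        (opow_lt_opow_iff_right one_lt_omega0).2 hb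
      have h2 : ordVal l < ω ^ ((a : Ordinal) + 1) := ih (fun c hc => h c (by simp [hc]))
      exact principal_add_omega0_opow _ h1 h2

private lemma ordVal_lt_of_lex {l l' : List ℕ} (hs : l.Pairwise (· ≥ ·))
    (h : List.Lex (· < ·) l l') : ordVal l < ordVal l' := by
  induction h with
  | nil =>
      simp only [ordVal]
      exact lt_of_lt_of_le (opow_pos _ omega0_pos) (le_self_add)
  | @cons a l₁ l₂ hlex ih =>
      simp only [ordVal]
      exact (add_lt_add_iff_left _).2 (ih hs.of_cons)
  | @rel a l₁ b l₂ hab =>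
      simp only [ordVal]
      have hall : ∀ c ∈ l₁, c ≤ a := fun c hc => List.rel_of_pairwise_cons hs hc
      have h1 : ordVal l₁ < ω ^ ((a : Ordinal) + 1) := ordVal_lt_of_forall_le hall
      have h2 : ω ^ (a : Ordinal) < ω ^ ((a : Ordinal) + 1) :=
        (opow_lt_opow_iff_right one_lt_omega0).2 (lt_add_one _)
      have h3 : ω ^ (a : Ordinal) + ordVal l₁ < ω ^ ((a : Ordinal) + 1) :=
        principal_add_omega0_opow _ h2 h1
      have h4 : ((a : Ordinal) + 1) ≤ (b : Ordinal) := by exact_mod_cast hab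
      calc ω ^ (a : Ordinal) + ordVal l₁ < ω ^ ((a : Ordinal) + 1) := h3
        _ ≤ ω ^ (b : Ordinal) := opow_le_opow_right omega0_pos h4
        _ ≤ ω ^ (b : Ordinal) + ordVal l₂ := le_self_add

/-- The lexicographic strict order on lists of naturals is well-founded when
restricted to lists sorted in non-increasing order: there is no infinite
strictly descending sequence of non-increasing lists. -/
theorem lex_wf_on_nonincreasing_lists :
    ¬ ∃ L : ℕ → List ℕ,
        (∀ i, (L i).Pairwise (· ≥ ·)) ∧ (∀ i, List.Lex (· < ·) (L (i + 1)) (L i)) := by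
  rintro ⟨L, hsort, hlex⟩
  have : ∀ i, ordVal (L (i + 1)) < ordVal (L i) :=
    fun i => ordVal_lt_of_lex (hsort (i + 1)) (hlex i)
  exact (RelEmbedding.natGT (fun i => ordVal (L i)) this).not_wellFounded
    (wellFounded_lt)
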